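/- In the decentralized finite-sum setting with the D-GET algorithm, for every iteration r with (n_r − 1)q ≤ r ≤ n_r q − 1 (where n_r = ⌊r/q⌋ + 1), the local gradient-estimation error satisfies E‖v^r − G(x^r)‖² ≤ (L²/|S₂|)∑_{t=(n_r−1)q}^{r} E‖x^{t+1} − x^t‖² + E‖v^{(n_r−1)q} − G(x^{(n_r−1)q})‖². -/

import Mathlib

open Finset MeasureTheory ProbabilityTheory

noncomputable section

/-- Euclidean space `ℝ^d`. -/
abbrev Vec (d : ℕ) := EuclideanSpace ℝ (Fin d)

/-- Stacked space `(ℝ^d)^m` with the Euclidean (ℓ²) norm. -/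
abbrev Stack (m d : ℕ) := PiLp 2 (fun _ : Fin m => Vec d)

/-- Blockwise action of an `m × m` matrix on `(ℝ^d)^m`. -/
def Wact {m d : ℕ} (W : Matrix (Fin m) (Fin m) ℝ) (x : Stack m d) : Stack m d :=
  WithLp.toLp 2 (fun i => ∑ k, W i k • x k)

/-- Matrix-vector product, valued in Euclidean space. -/
def mulVecE {m : ℕ} (W : Matrix (Fin m) (Fin m) ℝ) (u : Vec m) : Vec m :=
  WithLp.toLp 2 (fun i => ∑ k, W i k * u k)

/-- Block average `x̄ = (1/m) ∑ᵢ xᵢ`. -/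
def blockAvg {m d : ℕ} (x : Stack m d) : Vec d := (m : ℝ)⁻¹ • ∑ i, x i

/-- The stacked vector `𝟙 u` all of whose `m` blocks equal `u`. -/
def oneVec {m d : ℕ} (u : Vec d) : Stack m d := WithLp.toLp 2 (fun _ => u)

/-- Local cost of node `i` in the finite-sum setting: `fᶦ = (1/n) ∑ⱼ fᶦⱼ`. -/
def fLoc {m d n : ℕ} (f : Fin m → Fin n → Vec d → ℝ) (i : Fin m) : Vec d → ℝ :=
  fun w => (n : ℝ)⁻¹ * ∑ j, f i j w

/-- Global cost `f = (1/m) ∑ᵢ fᶦ`. -/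
def fTot {m d n : ℕ} (f : Fin m → Fin n → Vec d → ℝ) : Vec d → ℝ :=
  fun w => (m : ℝ)⁻¹ * ∑ i, fLoc f i w

/-- Stacked gradient `G(x) = (∇f¹(x₁),…,∇fᵐ(x_m))`. -/
def Gmap {m d n : ℕ} (f : Fin m → Fin n → Vec d → ℝ) (x : Stack m d) : Stack m d :=
  WithLp.toLp 2 (fun i => gradient (fLoc f i) (x i))

/-- Network-average gradient `(1/m) ∑ᵢ ∇fᶦ(xᵢ)`. -/
def avgGrad {m d n : ℕ} (f : Fin m → Fin n → Vec d → ℝ) (x : Stack m d) : Vec d :=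
  (m : ℝ)⁻¹ • ∑ i, gradient (fLoc f i) (x i)


set_option linter.unusedSectionVars false
open scoped RealInnerProductSpace

def vEst {m d n : ℕ} (S : ℕ) (f : Fin m → Fin n → Vec d → ℝ)
    (c : Fin S × Fin m → Fin n) (u u' vt : Stack m d) : Stack m d :=
  WithLp.toLp 2 (fun i => (S:ℝ)⁻¹ • ∑ b, (gradient (f i (c (b, i))) (u i)
    - gradient (f i (c (b, i))) (u' i)) + vt i)

lemma grad_avg {d n : ℕ} (g : Fin n → Vec d → ℝ) (hg : ∀ j, Differentiable ℝ (g j)) (w : Vec d) :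
    gradient (fun w => (n:ℝ)⁻¹ * ∑ j, g j w) w = (n:ℝ)⁻¹ • ∑ j, gradient (g j) w := by
  unfold gradient
  rw [fderiv_const_mul (DifferentiableAt.fun_sum fun j _ => (hg j).differentiableAt)]
  rw [fderiv_fun_sum fun j _ => (hg j).differentiableAt]
  simp [_root_.map_smul, map_sum]

lemma grad_fLoc {m d n : ℕ} (f : Fin m → Fin n → Vec d → ℝ)
    (hdiff : ∀ i j, Differentiable ℝ (f i j)) (i : Fin m) (w : Vec d) :
    gradient (fLoc f i) w = (n:ℝ)⁻¹ • ∑ j, gradient (f i j) w := by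
  unfold fLoc
  exact grad_avg (f i) (hdiff i) w


section comb
variable {κ β M : Type*} [Fintype κ] [DecidableEq κ] [Fintype β] [DecidableEq β]

lemma sum_eval [AddCommMonoid M] (k₀ : κ) (F : β → M) :
    ∑ h : κ → β, F (h k₀) = (Fintype.card β ^ (Fintype.card κ - 1)) • ∑ y, F y := by
  rw [show (∑ h : κ → β, F (h k₀)) = ∑ z : β × ({j // j ≠ k₀} → β), F z.1 from
    Fintype.sum_equiv (Equiv.funSplitAt k₀ β) _ _ (fun h => rfl)]
  rw [Fintype.sum_prod_type]
  simp only [Finset.sum_const, Finset.card_univ]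
  rw [← Finset.smul_sum]
  congr 1
  rw [Fintype.card_fun]
  congr 1
  simp [Fintype.card_subtype_compl]

lemma pair_eval (k₁ k₂ : κ) (hk : k₁ ≠ k₂) (F : β → β → ℝ) :
    ∑ h : κ → β, F (h k₁) (h k₂)
      = (Fintype.card β ^ (Fintype.card κ - 2)) • ∑ y₁, ∑ y₂, F y₁ y₂ := by
  rw [show (∑ h : κ → β, F (h k₁) (h k₂))
      = ∑ z : β × ({j // j ≠ k₁} → β), F z.1 (z.2 ⟨k₂, Ne.symm hk⟩) from
    Fintype.sum_equiv (Equiv.funSplitAt k₁ β) _ _ (fun h => rfl)]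
  rw [Fintype.sum_prod_type]
  have h1 : ∀ y₁, ∑ g : {j // j ≠ k₁} → β, F y₁ (g ⟨k₂, Ne.symm hk⟩)
      = (Fintype.card β ^ (Fintype.card {j // j ≠ k₁} - 1)) • ∑ y₂, F y₁ y₂ :=
    fun y₁ => sum_eval _ _
  rw [Finset.sum_congr rfl fun y₁ _ => h1 y₁, ← Finset.smul_sum]
  have : Fintype.card {j // j ≠ k₁} = Fintype.card κ - 1 := by
    simp [Fintype.card_subtype_compl]
  rw [this, show Fintype.card κ - 1 - 1 = Fintype.card κ - 2 by omega]

end comb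

lemma batch_bound {V : Type*} [NormedAddCommGroup V] [InnerProductSpace ℝ V]
    (n S : ℕ) (hn : 0 < n) (hS : 0 < S) (ζ : Fin n → V) (hζ : ∑ j, ζ j = 0)
    (Err : V) (Lb : ℝ) (hLb : 0 ≤ Lb) (hb : ∑ j, ‖ζ j‖^2 ≤ (n:ℝ) * Lb) :
    ∑ s : Fin S → Fin n, ‖(S:ℝ)⁻¹ • ∑ b, ζ (s b) + Err‖^2
      ≤ (n:ℝ)^S * ((S:ℝ)⁻¹ * Lb + ‖Err‖^2) := by
  set Q := ∑ j, ‖ζ j‖^2 with hQ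
  have hQ0 : 0 ≤ Q := Finset.sum_nonneg fun j _ => sq_nonneg _
  have hdiag : ∀ b : Fin S, ∑ s : Fin S → Fin n, (⟪ζ (s b), ζ (s b)⟫) = (n:ℝ)^(S-1) * Q := by
    intro b
    have := sum_eval (κ := Fin S) (β := Fin n) b (fun y => ⟪ζ y, ζ y⟫)
    simp only [Fintype.card_fin, nsmul_eq_mul, Nat.cast_pow] at this
    rw [this]
    simp [hQ, real_inner_self_eq_norm_sq]
  have hoff : ∀ b b' : Fin S, b ≠ b' → ∑ s : Fin S → Fin n, ⟪ζ (s b), ζ (s b')⟫ = 0 := by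
    intro b b' hne
    have := pair_eval (κ := Fin S) (β := Fin n) b b' hne (fun y₁ y₂ => ⟪ζ y₁, ζ y₂⟫)
    rw [this]
    have : ∑ y₁, ∑ y₂, ⟪ζ y₁, ζ y₂⟫ = ⟪∑ j, ζ j, ∑ j, ζ j⟫ := by
      rw [sum_inner]
      exact Finset.sum_congr rfl fun y₁ _ => (inner_sum _ _ _).symm
    rw [this, hζ, inner_zero_left, smul_zero]
  have hTsum : ∑ s : Fin S → Fin n, (∑ b, ζ (s b)) = 0 := by
    rw [Finset.sum_comm]
    refine Finset.sum_eq_zero fun b _ => ?_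
    rw [sum_eval (κ := Fin S) (β := Fin n) b ζ, hζ, smul_zero]
  have hTsq : ∑ s : Fin S → Fin n, ‖∑ b, ζ (s b)‖^2 = (S:ℝ) * ((n:ℝ)^(S-1) * Q) := by
    have e1 : ∀ s : Fin S → Fin n, ‖∑ b, ζ (s b)‖^2 = ∑ b, ∑ b', ⟪ζ (s b), ζ (s b')⟫ := by
      intro s
      rw [← real_inner_self_eq_norm_sq, sum_inner]
      exact Finset.sum_congr rfl fun b _ => inner_sum _ _ _
    rw [Finset.sum_congr rfl fun s _ => e1 s, Finset.sum_comm]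
    have e2 : ∀ b : Fin S, ∑ s : Fin S → Fin n, ∑ b', ⟪ζ (s b), ζ (s b')⟫
        = (n:ℝ)^(S-1) * Q := by
      intro b
      rw [Finset.sum_comm]
      rw [← Finset.add_sum_erase _ _ (Finset.mem_univ b)]
      rw [hdiag b, Finset.sum_eq_zero (fun b' hb' => hoff b b' (Finset.ne_of_mem_erase hb').symm),
        add_zero]
    rw [Finset.sum_congr rfl fun b _ => e2 b, Finset.sum_const, Finset.card_univ,
      Fintype.card_fin, nsmul_eq_mul]
  have hexp : ∀ s : Fin S → Fin n, ‖(S:ℝ)⁻¹ • ∑ b, ζ (s b) + Err‖^2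
      = (S:ℝ)⁻¹^2 * ‖∑ b, ζ (s b)‖^2 + 2 * ((S:ℝ)⁻¹ * ⟪∑ b, ζ (s b), Err⟫) + ‖Err‖^2 := by
    intro s
    rw [norm_add_sq_real, norm_smul, real_inner_smul_left, mul_pow]
    congr 2
    rw [norm_inv, Real.norm_natCast]
  calc ∑ s : Fin S → Fin n, ‖(S:ℝ)⁻¹ • ∑ b, ζ (s b) + Err‖^2
      = (S:ℝ)⁻¹^2 * ((S:ℝ) * ((n:ℝ)^(S-1) * Q))
        + 2 * ((S:ℝ)⁻¹ * ⟪∑ s : Fin S → Fin n, (∑ b, ζ (s b)), Err⟫)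
        + (n:ℝ)^S * ‖Err‖^2 := by
        rw [Finset.sum_congr rfl fun s _ => hexp s, Finset.sum_add_distrib,
          Finset.sum_add_distrib, ← Finset.mul_sum, hTsq, ← Finset.mul_sum, ← Finset.mul_sum,
          ← sum_inner, Finset.sum_const, Finset.card_univ, Fintype.card_fun, Fintype.card_fin,
          Fintype.card_fin, nsmul_eq_mul]
        push_cast
        ring
    _ = (S:ℝ)⁻¹ * ((n:ℝ)^(S-1) * Q) + (n:ℝ)^S * ‖Err‖^2 := by
        rw [hTsum, inner_zero_left]
        have hSne : (S:ℝ) ≠ 0 := Nat.cast_ne_zero.mpr hS.ne'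
        field_simp
        ring
    _ ≤ (S:ℝ)⁻¹ * ((n:ℝ)^S * Lb) + (n:ℝ)^S * ‖Err‖^2 := by
        have h1 : (n:ℝ)^(S-1) * Q ≤ (n:ℝ)^(S-1) * ((n:ℝ) * Lb) :=
          mul_le_mul_of_nonneg_left hb (by positivity)
        have h2 : (n:ℝ)^(S-1) * ((n:ℝ) * Lb) = (n:ℝ)^S * Lb := by
          rw [← mul_assoc, ← pow_succ]
          congr 2
          omega
        have := h1.trans_eq h2
        have hSinv : (0:ℝ) ≤ (S:ℝ)⁻¹ := by positivity
        nlinarith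
    _ = (n:ℝ)^S * ((S:ℝ)⁻¹ * Lb + ‖Err‖^2) := by ring

lemma slice_sum {n S m : ℕ} (i₀ : Fin m) (F : (Fin S → Fin n) → ℝ) :
    ∑ c : Fin S × Fin m → Fin n, F (fun b => c (b, i₀))
      = ((n^S) ^ (m-1) : ℕ) • ∑ s : Fin S → Fin n, F s := by
  rw [show (∑ c : Fin S × Fin m → Fin n, F (fun b => c (b, i₀)))
      = ∑ h : Fin m → Fin S → Fin n, F (h i₀) from Fintype.sum_equiv
      ⟨fun c i b => c (b, i), fun h z => h z.2 z.1,
        fun c => funext fun z => by cases z; rfl, fun h => rfl⟩ _ _ (fun c => rfl)]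
  rw [sum_eval i₀ F]
  have h1 : Fintype.card (Fin S → Fin n) = n ^ S := by simp [Fintype.card_fun]
  have h2 : Fintype.card (Fin m) = m := by simp
  rw [h1, h2]

lemma core_bound (m d n S : ℕ) (hm : 0 < m) (hn : 0 < n) (hS : 0 < S)
    (L : ℝ) (hL : 0 ≤ L) (f : Fin m → Fin n → Vec d → ℝ)
    (hdiff : ∀ i j, Differentiable ℝ (f i j))
    (hlip : ∀ i j (u u' : Vec d), ‖gradient (f i j) u - gradient (f i j) u'‖ ≤ L * ‖u - u'‖)
    (u u' vt : Stack m d) :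
    ∑ c : Fin S × Fin m → Fin n, ‖vEst S f c u u' vt - Gmap f u‖^2
      ≤ (n:ℝ)^(S*m) * (L^2 / S * ‖u - u'‖^2 + ‖vt - Gmap f u'‖^2) := by
  have hnR : ((n:ℝ)) ≠ 0 := Nat.cast_ne_zero.mpr hn.ne'
  set g : Fin m → Fin n → Vec d := fun i j =>
    gradient (f i j) (u i) - gradient (f i j) (u' i) with hg
  set gb : Fin m → Vec d := fun i => Gmap f u i - Gmap f u' i with hgbdef
  have hgb : ∀ i, gb i = (n:ℝ)⁻¹ • ∑ j, g i j := by
    intro i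
    simp only [hgbdef, Gmap, grad_fLoc f hdiff, hg, smul_sub, Finset.sum_sub_distrib]
  have hgbn : ∀ i, (n:ℝ) • gb i = ∑ j, g i j := by
    intro i
    rw [hgb i, smul_smul, mul_inv_cancel₀ hnR, one_smul]
  set ζ : Fin m → Fin n → Vec d := fun i j => g i j - gb i with hζ
  have hζ0 : ∀ i, ∑ j, ζ i j = 0 := by
    intro i
    have : ∑ j, ζ i j = (∑ j, g i j) - (n:ℝ) • gb i := by
      simp only [hζ]
      rw [Finset.sum_sub_distrib, Finset.sum_const, Finset.card_univ, Fintype.card_fin,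
        ← Nat.cast_smul_eq_nsmul ℝ]
    rw [this, hgbn i, sub_self]
  have hζb : ∀ i, ∑ j, ‖ζ i j‖^2 ≤ (n:ℝ) * (L^2 * ‖u i - u' i‖^2) := by
    intro i
    have h1 : ∑ j, ‖ζ i j‖^2 ≤ ∑ j, ‖g i j‖^2 := by
      have e2 : ∑ j, ‖ζ i j‖^2 = ∑ j, ‖g i j‖^2 - (n:ℝ) * ‖gb i‖^2 := by
        have e1 : ∀ j, ‖ζ i j‖^2 = ‖g i j‖^2 - 2 * ⟪g i j, gb i⟫ + ‖gb i‖^2 := by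
          intro j
          simp only [hζ]
          rw [norm_sub_sq_real]
        rw [Finset.sum_congr rfl fun j _ => e1 j]
        rw [Finset.sum_add_distrib, Finset.sum_sub_distrib, ← Finset.mul_sum, ← sum_inner,
          ← hgbn i, real_inner_smul_left, real_inner_self_eq_norm_sq, Finset.sum_const,
          Finset.card_univ, Fintype.card_fin, nsmul_eq_mul]
        ring
      rw [e2]
      have : 0 ≤ (n:ℝ) * ‖gb i‖^2 := by positivity
      linarith
    have h2 : ∑ j, ‖g i j‖^2 ≤ ∑ j : Fin n, (L * ‖u i - u' i‖)^2 :=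
      Finset.sum_le_sum fun j _ => pow_le_pow_left₀ (norm_nonneg _) (hlip i j (u i) (u' i)) 2
    calc ∑ j, ‖ζ i j‖^2 ≤ ∑ j : Fin n, (L * ‖u i - u' i‖)^2 := h1.trans h2
      _ = (n:ℝ) * (L^2 * ‖u i - u' i‖^2) := by
          rw [Finset.sum_const, Finset.card_univ, Fintype.card_fin, nsmul_eq_mul]
          ring
  set Err : Fin m → Vec d := fun i => vt i - Gmap f u' i with hErr
  have hblock : ∀ (c : Fin S × Fin m → Fin n) (i : Fin m),
      (vEst S f c u u' vt - Gmap f u) i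
        = (S:ℝ)⁻¹ • ∑ b, ζ i (c (b, i)) + Err i := by
    intro c i
    have hSR : ((S:ℝ)) ≠ 0 := Nat.cast_ne_zero.mpr hS.ne'
    have e1 : ∑ b : Fin S, (gradient (f i (c (b, i))) (u i) - gradient (f i (c (b, i))) (u' i))
        = ∑ b, ζ i (c (b, i)) + (S:ℝ) • gb i := by
      have : ∀ b : Fin S, (gradient (f i (c (b, i))) (u i) - gradient (f i (c (b, i))) (u' i))
          = ζ i (c (b, i)) + gb i := by
        intro b; simp only [hζ, hg]; abel
      rw [Finset.sum_congr rfl fun b _ => this b, Finset.sum_add_distrib, Finset.sum_const,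
        Finset.card_univ, Fintype.card_fin, ← Nat.cast_smul_eq_nsmul ℝ]
    show ((S:ℝ)⁻¹ • ∑ b : Fin S, (gradient (f i (c (b, i))) (u i)
        - gradient (f i (c (b, i))) (u' i)) + vt i) - Gmap f u i
      = (S:ℝ)⁻¹ • ∑ b, ζ i (c (b, i)) + Err i
    rw [e1, smul_add, smul_smul, inv_mul_cancel₀ hSR, one_smul, hErr]
    simp only [hgbdef]
    abel
  calc ∑ c : Fin S × Fin m → Fin n, ‖vEst S f c u u' vt - Gmap f u‖^2
      = ∑ c : Fin S × Fin m → Fin n, ∑ i,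
          ‖(S:ℝ)⁻¹ • ∑ b, ζ i (c (b, i)) + Err i‖^2 := by
        refine Finset.sum_congr rfl fun c _ => ?_
        rw [PiLp.norm_sq_eq_of_L2]
        exact Finset.sum_congr rfl fun i _ => by rw [hblock c i]
    _ = ∑ i, ∑ c : Fin S × Fin m → Fin n, ‖(S:ℝ)⁻¹ • ∑ b, ζ i (c (b, i)) + Err i‖^2 :=
        Finset.sum_comm
    _ = ∑ i, ((n^S) ^ (m-1) : ℕ) • ∑ s : Fin S → Fin n, ‖(S:ℝ)⁻¹ • ∑ b, ζ i (s b) + Err i‖^2 :=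
        Finset.sum_congr rfl fun i _ =>
          slice_sum i (fun s => ‖(S:ℝ)⁻¹ • ∑ b, ζ i (s b) + Err i‖^2)
    _ ≤ ∑ i, ((n:ℝ)^S) ^ (m-1) * ((n:ℝ)^S * ((S:ℝ)⁻¹ * (L^2 * ‖u i - u' i‖^2) + ‖Err i‖^2)) := by
        refine Finset.sum_le_sum fun i _ => ?_
        rw [nsmul_eq_mul]
        push_cast
        refine mul_le_mul_of_nonneg_left ?_ (by positivity)
        exact batch_bound n S hn hS (ζ i) (hζ0 i) (Err i) (L^2 * ‖u i - u' i‖^2)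
          (by positivity) (hζb i)
    _ = (n:ℝ)^(S*m) * (L^2 / S * ‖u - u'‖^2 + ‖vt - Gmap f u'‖^2) := by
        have hpow : ((n:ℝ)^S) ^ (m-1) * ((n:ℝ)^S) = (n:ℝ)^(S*m) := by
          rw [← pow_succ, ← pow_mul]
          congr 1
          have : m - 1 + 1 = m := by omega
          rw [this, Nat.mul_comm]
        rw [show (∑ i, ((n:ℝ)^S) ^ (m-1) * ((n:ℝ)^S * ((S:ℝ)⁻¹ * (L^2 * ‖u i - u' i‖^2) + ‖Err i‖^2)))
            = ((n:ℝ)^S) ^ (m-1) * ((n:ℝ)^S) * ∑ i, ((S:ℝ)⁻¹ * (L^2 * ‖u i - u' i‖^2) + ‖Err i‖^2) from by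
          rw [Finset.mul_sum]; exact Finset.sum_congr rfl fun i _ => by ring]
        rw [hpow]
        congr 1
        rw [PiLp.norm_sq_eq_of_L2, PiLp.norm_sq_eq_of_L2, Finset.sum_add_distrib,
          Finset.mul_sum]
        congr 1
        · refine Finset.sum_congr rfl fun i _ => ?_
          have huu : (u - u') i = u i - u' i := rfl
          rw [huu]
          ring

open MeasureTheory ProbabilityTheory in
lemma expect_eq {n S2 m : ℕ} {Ω : Type} [MeasurableSpace Ω] (μ : Measure Ω)
    [IsProbabilityMeasure μ] (J : ℕ → Fin S2 → Fin m → Ω → Fin n) (hn : 0 < n)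
    (hJmeas : ∀ r b i, Measurable (J r b i))
    (hJunif : ∀ r b i j, μ {ω | J r b i ω = j} = (n : ENNReal)⁻¹)
    (hJindep : iIndepFun
      (fun p : ℕ × Fin S2 × Fin m => J p.1 p.2.1 p.2.2) μ)
    {κ : Type} [Fintype κ] [DecidableEq κ] (e : κ → ℕ × Fin S2 × Fin m)
    (he : Function.Injective e) (K : (κ → Fin n) → ℝ) :
    ∫ ω, K (fun k => J (e k).1 (e k).2.1 (e k).2.2 ω) ∂μ
      = ((n:ℝ)⁻¹)^(Fintype.card κ) * ∑ p : κ → Fin n, K p := by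
  set JJ : (ℕ × Fin S2 × Fin m) → Ω → Fin n := fun z => J z.1 z.2.1 z.2.2 with hJJ
  have hmeas : ∀ p : κ → Fin n, MeasurableSet {ω | ∀ k, JJ (e k) ω = p k} := by
    intro p
    have : {ω | ∀ k, JJ (e k) ω = p k} = ⋂ k, JJ (e k) ⁻¹' {p k} := by
      ext ω; simp [Set.mem_iInter, Set.mem_preimage]
    rw [this]
    exact MeasurableSet.iInter fun k => (hJmeas _ _ _) (measurableSet_singleton _)
  have hprob : ∀ p : κ → Fin n,
      μ {ω | ∀ k, JJ (e k) ω = p k} = ((n:ENNReal)⁻¹)^(Fintype.card κ) := by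
    intro p
    classical
    set sets : (ℕ × Fin S2 × Fin m) → Set (Fin n) := fun z => {j | ∀ k, e k = z → p k = j}
      with hsets
    have hs : ∀ k, sets (e k) = {p k} := by
      intro k
      ext j
      simp only [hsets, Set.mem_setOf_eq, Set.mem_singleton_iff]
      constructor
      · intro h; exact (h k rfl).symm
      · intro h k' hk'; rw [he hk', h]
    have key := hJindep.measure_inter_preimage_eq_mul (Finset.univ.image e)
      (sets := sets) (fun z _ => trivial)
    have hset_eq : (⋂ z ∈ Finset.univ.image e, JJ z ⁻¹' sets z)
        = {ω | ∀ k, JJ (e k) ω = p k} := by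
      ext ω
      simp only [Set.mem_iInter, Finset.mem_image, Finset.mem_univ, true_and,
        Set.mem_preimage, Set.mem_setOf_eq]
      constructor
      · intro h k
        have := h (e k) ⟨k, rfl⟩
        rw [show JJ (e k) ω ∈ sets (e k) ↔ JJ (e k) ω = p k from by rw [hs k]; rfl] at this
        exact this
      · rintro h z ⟨k, rfl⟩
        rw [show JJ (e k) ω ∈ sets (e k) ↔ JJ (e k) ω = p k from by rw [hs k]; rfl]
        exact h k
    have hprod : (∏ z ∈ Finset.univ.image e, μ (JJ z ⁻¹' sets z))
        = ((n:ENNReal)⁻¹)^(Fintype.card κ) := by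
      rw [Finset.prod_image (fun k _ k' _ h => he h)]
      have : ∀ k : κ, μ (JJ (e k) ⁻¹' sets (e k)) = (n:ENNReal)⁻¹ := by
        intro k
        rw [hs k]
        have : JJ (e k) ⁻¹' {p k} = {ω | JJ (e k) ω = p k} := by
          ext ω; simp [Set.mem_preimage]
        rw [this]
        exact hJunif _ _ _ _
      rw [Finset.prod_congr rfl fun k _ => this k, Finset.prod_const, Finset.card_univ]
    rw [← hset_eq, key, hprod]
  have hpt : (fun ω => K (fun k => JJ (e k) ω))
      = fun ω => ∑ p : κ → Fin n,
          Set.indicator {ω' | ∀ k, JJ (e k) ω' = p k} (fun _ => K p) ω := by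
    funext ω
    rw [Finset.sum_eq_single (fun k => JJ (e k) ω)]
    · rw [Set.indicator_of_mem]
      exact fun k => rfl
    · intro p _ hp
      refine Set.indicator_of_notMem (fun hmem => hp ?_) _
      exact funext fun k => (hmem k).symm
    · intro h
      exact absurd (Finset.mem_univ _) h
  show ∫ ω, K (fun k => JJ (e k) ω) ∂μ = _
  rw [hpt, integral_finset_sum Finset.univ
    (fun p _ => (integrable_const (K p)).indicator (hmeas p))]
  rw [Finset.sum_congr rfl fun p _ => integral_indicator_const (K p) (hmeas p)]
  rw [Finset.sum_congr rfl fun p (_ : p ∈ Finset.univ) => by rw [measureReal_def, hprob p]]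
  rw [show (((n:ENNReal)⁻¹)^(Fintype.card κ)).toReal = ((n:ℝ)⁻¹)^(Fintype.card κ) from by
    rw [ENNReal.toReal_pow, ENNReal.toReal_inv, ENNReal.toReal_natCast]]
  rw [← Finset.smul_sum, smul_eq_mul]

noncomputable def XVY {m d : ℕ} (n q S2 : ℕ) (α : ℝ) (f : Fin m → Fin n → Vec d → ℝ)
    (W : Matrix (Fin m) (Fin m) ℝ) (x0 : Stack m d) :
    ℕ → (ℕ → Fin S2 → Fin m → Fin n) → Stack m d × Stack m d × Stack m d
  | 0, _ => (x0, Gmap f x0, Gmap f x0)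
  | (t+1), c =>
      let P := XVY n q S2 α f W x0 t c
      let x' := Wact W P.1 - α • P.2.2
      let v' : Stack m d := if q ∣ (t+1) then Gmap f x'
        else WithLp.toLp 2 (fun i => (S2:ℝ)⁻¹ • ∑ b, (gradient (f i (c (t+1) b i)) (x' i)
          - gradient (f i (c (t+1) b i)) (P.1 i)) + P.2.1 i)
      (x', v', Wact W P.2.2 + v' - P.2.1)

lemma XVY_congr {m d : ℕ} (n q S2 : ℕ) (α : ℝ) (f : Fin m → Fin n → Vec d → ℝ)
    (W : Matrix (Fin m) (Fin m) ℝ) (x0 : Stack m d) :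
    ∀ (t : ℕ) (c c' : ℕ → Fin S2 → Fin m → Fin n), (∀ s, s ≤ t → c s = c' s) →
      XVY n q S2 α f W x0 t c = XVY n q S2 α f W x0 t c'
  | 0, c, c', h => rfl
  | (t+1), c, c', h => by
      have IH := XVY_congr n q S2 α f W x0 t c c' (fun s hs => h s (Nat.le_succ_of_le hs))
      simp only [XVY]
      rw [IH, h (t+1) le_rfl]

def extc {S2 m n : ℕ} (j0 : Fin n) (T : ℕ) (p : Fin T × Fin S2 × Fin m → Fin n) :
    ℕ → Fin S2 → Fin m → Fin n :=
  fun s b i => if h : s < T then p (⟨s, h⟩, b, i) else j0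

lemma sum_sum_split {κ₁ κ₂ β M : Type*} [Fintype κ₁] [Fintype κ₂] [Fintype β]
    [DecidableEq κ₁] [DecidableEq κ₂] [AddCommMonoid M]
    (F : (κ₁ → β) → (κ₂ → β) → M) :
    ∑ p : κ₁ ⊕ κ₂ → β, F (p ∘ Sum.inl) (p ∘ Sum.inr) = ∑ p₁, ∑ p₂, F p₁ p₂ := by
  rw [show (∑ p : κ₁ ⊕ κ₂ → β, F (p ∘ Sum.inl) (p ∘ Sum.inr))
      = ∑ z : (κ₁ → β) × (κ₂ → β), F z.1 z.2 from Fintype.sum_equiv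
      (Equiv.sumArrowEquivProdArrow κ₁ κ₂ β) _ _ (fun p => rfl)]
  rw [Fintype.sum_prod_type]

/-- Lemma 1, part 2: bound on the local gradient-estimation variance over the
current inner loop.  Here `n_r = ⌊r/q⌋ + 1`, so `(n_r − 1)q = (r/q)·q`, and every iteration
`r` satisfies `(n_r − 1)q ≤ r ≤ n_r q − 1`. -/
theorem stmt9
    (m d n q S2 : ℕ) (hm : 0 < m) (hn : 0 < n) (hq : 1 ≤ q) (hS2 : 0 < S2)
    (L η α : ℝ) (hL : 0 ≤ L) (hη0 : 0 ≤ η) (hη1 : η < 1) (hα : 0 < α)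
    (f : Fin m → Fin n → Vec d → ℝ)
    (hdiff : ∀ i j, Differentiable ℝ (f i j))
    (hlip : ∀ i j (u u' : Vec d),
      ‖gradient (f i j) u - gradient (f i j) u'‖ ≤ L * ‖u - u'‖)
    (W : Matrix (Fin m) (Fin m) ℝ) (hWsymm : W.IsSymm)
    (hW1 : W.mulVec (fun _ => (1 : ℝ)) = fun _ => (1 : ℝ))
    (hWcontract : ∀ u : Vec m, (∑ k, u k) = 0 → ‖mulVecE W u‖ ≤ η * ‖u‖)
    (Ω : Type) [MeasurableSpace Ω] (μ : Measure Ω) [IsProbabilityMeasure μ]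
    (J : ℕ → Fin S2 → Fin m → Ω → Fin n)
    (hJmeas : ∀ r b i, Measurable (J r b i))
    (hJunif : ∀ r b i j, μ {ω | J r b i ω = j} = (n : ENNReal)⁻¹)
    (hJindep : iIndepFun
      (fun p : ℕ × Fin S2 × Fin m => J p.1 p.2.1 p.2.2) μ)
    (x0 : Stack m d) (x v y : ℕ → Ω → Stack m d)
    (hx0 : ∀ ω, x 0 ω = x0)
    (hy0 : ∀ ω, y 0 ω = v 0 ω)
    (hxrec : ∀ r ω, x (r + 1) ω = Wact W (x r ω) - α • y r ω)
    (hvfull : ∀ r, q ∣ r → ∀ ω, v r ω = Gmap f (x r ω))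
    (hvest : ∀ r, ¬ q ∣ (r + 1) → ∀ ω i, v (r + 1) ω i =
      (S2 : ℝ)⁻¹ • ∑ b, (gradient (f i (J (r + 1) b i ω)) (x (r + 1) ω i)
        - gradient (f i (J (r + 1) b i ω)) (x r ω i)) + v r ω i)
    (hyrec : ∀ r ω, y (r + 1) ω = Wact W (y r ω) + v (r + 1) ω - v r ω)
    :
    ∀ r : ℕ,
      (∫ ω, ‖v r ω - Gmap f (x r ω)‖ ^ 2 ∂μ) ≤
        L ^ 2 / (S2 : ℝ) *
            ∑ t ∈ Finset.Icc (r / q * q) r, ∫ ω, ‖x (t + 1) ω - x t ω‖ ^ 2 ∂μ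
        + ∫ ω, ‖v (r / q * q) ω - Gmap f (x (r / q * q) ω)‖ ^ 2 ∂μ := by
  classical
  -- match the process with the deterministic recursion
  have hmatch : ∀ t ω, (x t ω, v t ω, y t ω)
      = XVY n q S2 α f W x0 t (fun s b i => J s b i ω) := by
    intro t
    induction t with
    | zero =>
      intro ω
      simp only [XVY, Prod.mk.injEq]
      refine ⟨hx0 ω, ?_, ?_⟩
      · rw [hvfull 0 (dvd_zero q) ω, hx0 ω]
      · rw [hy0 ω, hvfull 0 (dvd_zero q) ω, hx0 ω]
    | succ t IH =>
      intro ω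
      have hxt : x t ω = (XVY n q S2 α f W x0 t (fun s b i => J s b i ω)).1 :=
        congrArg Prod.fst (IH ω)
      have hvt : v t ω = (XVY n q S2 α f W x0 t (fun s b i => J s b i ω)).2.1 :=
        congrArg (fun z => z.2.1) (IH ω)
      have hyt : y t ω = (XVY n q S2 α f W x0 t (fun s b i => J s b i ω)).2.2 :=
        congrArg (fun z => z.2.2) (IH ω)
      have hx' : x (t+1) ω = Wact W (XVY n q S2 α f W x0 t (fun s b i => J s b i ω)).1
          - α • (XVY n q S2 α f W x0 t (fun s b i => J s b i ω)).2.2 := by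
        rw [hxrec t ω, hxt, hyt]
      have hv' : v (t+1) ω = (if q ∣ (t+1) then
          Gmap f (Wact W (XVY n q S2 α f W x0 t (fun s b i => J s b i ω)).1
            - α • (XVY n q S2 α f W x0 t (fun s b i => J s b i ω)).2.2)
          else WithLp.toLp 2 (fun i => (S2:ℝ)⁻¹ • ∑ b, (gradient (f i (J (t+1) b i ω))
              ((Wact W (XVY n q S2 α f W x0 t (fun s b i => J s b i ω)).1
                - α • (XVY n q S2 α f W x0 t (fun s b i => J s b i ω)).2.2) i)
            - gradient (f i (J (t+1) b i ω))
              ((XVY n q S2 α f W x0 t (fun s b i => J s b i ω)).1 i))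
            + (XVY n q S2 α f W x0 t (fun s b i => J s b i ω)).2.1 i)) := by
        by_cases hdvd : q ∣ (t+1)
        · rw [if_pos hdvd, hvfull (t+1) hdvd ω, hx']
        · rw [if_neg hdvd]
          refine PiLp.ext fun i => ?_
          rw [hvest t hdvd ω i, hx', hxt, hvt]
      have hy' : y (t+1) ω = Wact W (XVY n q S2 α f W x0 t (fun s b i => J s b i ω)).2.2
          + v (t+1) ω - (XVY n q S2 α f W x0 t (fun s b i => J s b i ω)).2.1 := by
        rw [hyrec t ω, hyt, hvt]
      simp only [XVY, Prod.mk.injEq]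
      refine ⟨hx', ?_, ?_⟩
      · exact hv'
      · rw [hy', hv']
  -- one-step variance bound
  have hstep : ∀ r : ℕ, ¬ q ∣ (r+1) →
      (∫ ω, ‖v (r+1) ω - Gmap f (x (r+1) ω)‖ ^ 2 ∂μ)
        ≤ L ^ 2 / (S2:ℝ) * (∫ ω, ‖x (r+1) ω - x r ω‖ ^ 2 ∂μ)
          + ∫ ω, ‖v r ω - Gmap f (x r ω)‖ ^ 2 ∂μ := by
    intro r hdvd
    set P : ((Fin (r+1) × Fin S2 × Fin m) → Fin n) → Stack m d × Stack m d × Stack m d :=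
      fun p => XVY n q S2 α f W x0 r (extc ⟨0, hn⟩ (r+1) p) with hP
    set Xp' : ((Fin (r+1) × Fin S2 × Fin m) → Fin n) → Stack m d :=
      fun p => Wact W (P p).1 - α • (P p).2.2 with hXp'
    set e₁ : (Fin (r+1) × Fin S2 × Fin m) → ℕ × Fin S2 × Fin m :=
      fun z => (z.1.1, z.2) with he₁def
    have he₁ : Function.Injective e₁ := by
      rintro ⟨s, b⟩ ⟨s', b'⟩ h
      simp only [he₁def, Prod.mk.injEq] at h
      exact Prod.ext_iff.mpr ⟨Fin.ext h.1, h.2⟩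
    set e₂ : (Fin S2 × Fin m) → ℕ × Fin S2 × Fin m := fun z => (r+1, z) with he₂def
    set e : (Fin (r+1) × Fin S2 × Fin m) ⊕ (Fin S2 × Fin m) → ℕ × Fin S2 × Fin m :=
      Sum.elim e₁ e₂ with hedef
    have he : Function.Injective e := by
      rintro (z | z) (z' | z') h <;> simp only [hedef, he₁def, he₂def, Sum.elim_inl,
        Sum.elim_inr, Prod.mk.injEq, Sum.inl.injEq, Sum.inr.injEq] at h ⊢
      · exact Prod.ext_iff.mpr ⟨Fin.ext h.1, h.2⟩
      · exact absurd h.1 (by omega)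
      · exact absurd h.1 (by omega)
      · exact h.2
    have hfact : ∀ ω, XVY n q S2 α f W x0 r (fun s b i => J s b i ω)
        = P (fun k => J k.1.1 k.2.1 k.2.2 ω) := by
      intro ω
      apply XVY_congr
      intro s hs
      funext b i
      simp only [extc]
      rw [dif_pos (Nat.lt_succ_of_le hs)]
    have hxr : ∀ ω, x r ω = (P (fun k => J k.1.1 k.2.1 k.2.2 ω)).1 := fun ω => by
      have h1 : x r ω = (XVY n q S2 α f W x0 r (fun s b i => J s b i ω)).1 :=
        congrArg Prod.fst (hmatch r ω)
      rw [h1, hfact ω]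
    have hvr : ∀ ω, v r ω = (P (fun k => J k.1.1 k.2.1 k.2.2 ω)).2.1 := fun ω => by
      have h1 : v r ω = (XVY n q S2 α f W x0 r (fun s b i => J s b i ω)).2.1 :=
        congrArg (fun z => z.2.1) (hmatch r ω)
      rw [h1, hfact ω]
    have hyr : ∀ ω, y r ω = (P (fun k => J k.1.1 k.2.1 k.2.2 ω)).2.2 := fun ω => by
      have h1 : y r ω = (XVY n q S2 α f W x0 r (fun s b i => J s b i ω)).2.2 :=
        congrArg (fun z => z.2.2) (hmatch r ω)
      rw [h1, hfact ω]
    have hxr1 : ∀ ω, x (r+1) ω = Xp' (fun k => J k.1.1 k.2.1 k.2.2 ω) := fun ω => by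
      rw [hxrec r ω, hxr ω, hyr ω]
    have hv1 : ∀ ω, v (r+1) ω
        = vEst S2 f (fun z => J (r+1) z.1 z.2 ω) (x (r+1) ω) (x r ω) (v r ω) := by
      intro ω
      refine PiLp.ext fun i => ?_
      rw [hvest r hdvd ω i]
      rfl
    -- expectation identities
    have hEr : (∫ ω, ‖v r ω - Gmap f (x r ω)‖ ^ 2 ∂μ)
        = ((n:ℝ)⁻¹)^(Fintype.card (Fin (r+1) × Fin S2 × Fin m))
          * ∑ p : (Fin (r+1) × Fin S2 × Fin m) → Fin n,
              ‖(P p).2.1 - Gmap f ((P p).1)‖ ^ 2 := by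
      have hi : (fun ω => ‖v r ω - Gmap f (x r ω)‖ ^ 2)
          = fun ω => (fun p => ‖(P p).2.1 - Gmap f ((P p).1)‖ ^ 2)
              (fun k => J (e₁ k).1 (e₁ k).2.1 (e₁ k).2.2 ω) := funext fun ω => by
        rw [hvr ω, hxr ω]
      rw [hi]
      exact expect_eq μ J hn hJmeas hJunif hJindep e₁ he₁
        (fun p => ‖(P p).2.1 - Gmap f ((P p).1)‖ ^ 2)
    have hDr : (∫ ω, ‖x (r+1) ω - x r ω‖ ^ 2 ∂μ)
        = ((n:ℝ)⁻¹)^(Fintype.card (Fin (r+1) × Fin S2 × Fin m))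
          * ∑ p : (Fin (r+1) × Fin S2 × Fin m) → Fin n, ‖Xp' p - (P p).1‖ ^ 2 := by
      have hi : (fun ω => ‖x (r+1) ω - x r ω‖ ^ 2)
          = fun ω => (fun p => ‖Xp' p - (P p).1‖ ^ 2)
              (fun k => J (e₁ k).1 (e₁ k).2.1 (e₁ k).2.2 ω) := funext fun ω => by
        rw [hxr1 ω, hxr ω]
      rw [hi]
      exact expect_eq μ J hn hJmeas hJunif hJindep e₁ he₁
        (fun p => ‖Xp' p - (P p).1‖ ^ 2)
    have hEr1 : (∫ ω, ‖v (r+1) ω - Gmap f (x (r+1) ω)‖ ^ 2 ∂μ)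
        = ((n:ℝ)⁻¹)^(Fintype.card ((Fin (r+1) × Fin S2 × Fin m) ⊕ (Fin S2 × Fin m)))
          * ∑ p₁ : (Fin (r+1) × Fin S2 × Fin m) → Fin n, ∑ p₂ : (Fin S2 × Fin m) → Fin n,
              ‖vEst S2 f p₂ (Xp' p₁) ((P p₁).1) ((P p₁).2.1) - Gmap f (Xp' p₁)‖ ^ 2 := by
      rw [← sum_sum_split (fun p₁ p₂ =>
        ‖vEst S2 f p₂ (Xp' p₁) ((P p₁).1) ((P p₁).2.1) - Gmap f (Xp' p₁)‖ ^ 2)]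
      have hi : (fun ω => ‖v (r+1) ω - Gmap f (x (r+1) ω)‖ ^ 2)
          = fun ω => (fun p => ‖vEst S2 f (p ∘ Sum.inr) (Xp' (p ∘ Sum.inl))
              ((P (p ∘ Sum.inl)).1) ((P (p ∘ Sum.inl)).2.1)
              - Gmap f (Xp' (p ∘ Sum.inl))‖ ^ 2)
              (fun k => J (e k).1 (e k).2.1 (e k).2.2 ω) := funext fun ω => by
        rw [hv1 ω, hxr1 ω, hxr ω, hvr ω]
        rfl
      rw [hi]
      exact expect_eq μ J hn hJmeas hJunif hJindep e he
        (fun p => ‖vEst S2 f (p ∘ Sum.inr) (Xp' (p ∘ Sum.inl)) ((P (p ∘ Sum.inl)).1)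
          ((P (p ∘ Sum.inl)).2.1) - Gmap f (Xp' (p ∘ Sum.inl))‖ ^ 2)
    -- core bound, summed
    have hcore : ∀ p₁ : (Fin (r+1) × Fin S2 × Fin m) → Fin n,
        ∑ p₂ : (Fin S2 × Fin m) → Fin n,
          ‖vEst S2 f p₂ (Xp' p₁) ((P p₁).1) ((P p₁).2.1) - Gmap f (Xp' p₁)‖ ^ 2
        ≤ (n:ℝ)^(S2*m) * (L^2 / S2 * ‖Xp' p₁ - (P p₁).1‖ ^ 2
            + ‖(P p₁).2.1 - Gmap f ((P p₁).1)‖ ^ 2) := by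
      intro p₁
      exact core_bound m d n S2 hm hn hS2 L hL f hdiff hlip (Xp' p₁) ((P p₁).1) ((P p₁).2.1)
    -- put everything together
    have hcard₂ : Fintype.card (Fin S2 × Fin m) = S2 * m := by simp
    have hcards : Fintype.card ((Fin (r+1) × Fin S2 × Fin m) ⊕ (Fin S2 × Fin m))
        = Fintype.card (Fin (r+1) × Fin S2 × Fin m) + S2 * m := by
      rw [Fintype.card_sum, hcard₂]
    have hu0 : (0:ℝ) ≤ (n:ℝ)⁻¹ := by positivity
    have hun : ((n:ℝ)⁻¹)^(S2*m) * (n:ℝ)^(S2*m) = 1 := by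
      rw [← mul_pow, inv_mul_cancel₀ (by exact_mod_cast hn.ne')]
      simp
    rw [hEr1, hEr, hDr, hcards, pow_add]
    set N₁ := Fintype.card (Fin (r+1) × Fin S2 × Fin m)
    calc ((n:ℝ)⁻¹)^N₁ * ((n:ℝ)⁻¹)^(S2*m)
          * ∑ p₁ : (Fin (r+1) × Fin S2 × Fin m) → Fin n, ∑ p₂ : (Fin S2 × Fin m) → Fin n,
              ‖vEst S2 f p₂ (Xp' p₁) ((P p₁).1) ((P p₁).2.1) - Gmap f (Xp' p₁)‖ ^ 2
        ≤ ((n:ℝ)⁻¹)^N₁ * ((n:ℝ)⁻¹)^(S2*m)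
          * ∑ p₁ : (Fin (r+1) × Fin S2 × Fin m) → Fin n,
              (n:ℝ)^(S2*m) * (L^2 / S2 * ‖Xp' p₁ - (P p₁).1‖ ^ 2
                + ‖(P p₁).2.1 - Gmap f ((P p₁).1)‖ ^ 2) := by
          refine mul_le_mul_of_nonneg_left (Finset.sum_le_sum fun p₁ _ => hcore p₁)
            (by positivity)
      _ = L ^ 2 / (S2:ℝ) * (((n:ℝ)⁻¹)^N₁
            * ∑ p : (Fin (r+1) × Fin S2 × Fin m) → Fin n, ‖Xp' p - (P p).1‖ ^ 2)
          + ((n:ℝ)⁻¹)^N₁ * ∑ p : (Fin (r+1) × Fin S2 × Fin m) → Fin n,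
              ‖(P p).2.1 - Gmap f ((P p).1)‖ ^ 2 := by
          have h1 : (∑ p₁ : (Fin (r+1) × Fin S2 × Fin m) → Fin n,
              (n:ℝ)^(S2*m) * (L^2 / S2 * ‖Xp' p₁ - (P p₁).1‖ ^ 2
                + ‖(P p₁).2.1 - Gmap f ((P p₁).1)‖ ^ 2))
              = (n:ℝ)^(S2*m) * (L^2 / S2
                  * (∑ p : (Fin (r+1) × Fin S2 × Fin m) → Fin n, ‖Xp' p - (P p).1‖ ^ 2)
                + ∑ p : (Fin (r+1) × Fin S2 × Fin m) → Fin n,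
                    ‖(P p).2.1 - Gmap f ((P p).1)‖ ^ 2) := by
            rw [← Finset.mul_sum]
            congr 1
            rw [Finset.sum_add_distrib, ← Finset.mul_sum]
          rw [h1]
          have h2 : ((n:ℝ)⁻¹)^(S2*m) * (n:ℝ)^(S2*m) = 1 := hun
          set A := ∑ p : (Fin (r+1) × Fin S2 × Fin m) → Fin n, ‖Xp' p - (P p).1‖ ^ 2
          set B := ∑ p : (Fin (r+1) × Fin S2 × Fin m) → Fin n,
            ‖(P p).2.1 - Gmap f ((P p).1)‖ ^ 2
          calc ((n:ℝ)⁻¹)^N₁ * ((n:ℝ)⁻¹)^(S2*m) * ((n:ℝ)^(S2*m) * (L^2 / S2 * A + B))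
              = (((n:ℝ)⁻¹)^(S2*m) * (n:ℝ)^(S2*m)) * (((n:ℝ)⁻¹)^N₁ * (L^2 / S2 * A + B)) := by
                ring
            _ = L ^ 2 / (S2:ℝ) * (((n:ℝ)⁻¹)^N₁ * A) + ((n:ℝ)⁻¹)^N₁ * B := by
                rw [h2, one_mul]
                ring
  -- strengthened statement by induction
  have hDnonneg : ∀ t : ℕ, 0 ≤ ∫ ω, ‖x (t + 1) ω - x t ω‖ ^ 2 ∂μ := fun t =>
    integral_nonneg fun ω => by positivity
  have main : ∀ r : ℕ,
      (∫ ω, ‖v r ω - Gmap f (x r ω)‖ ^ 2 ∂μ) ≤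
        L ^ 2 / (S2 : ℝ) *
            ∑ t ∈ Finset.Ico (r / q * q) r, ∫ ω, ‖x (t + 1) ω - x t ω‖ ^ 2 ∂μ
        + ∫ ω, ‖v (r / q * q) ω - Gmap f (x (r / q * q) ω)‖ ^ 2 ∂μ := by
    intro r
    induction r with
    | zero => simp
    | succ r IH =>
      by_cases hdvd : q ∣ (r+1)
      · have h1 : (r+1)/q*q = r+1 := Nat.div_mul_cancel hdvd
        rw [h1]
        simp
      · have h1 : (r+1)/q = r/q := by
          rw [Nat.succ_div, if_neg hdvd, add_zero]
        rw [h1]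
        have h2 : r/q*q ≤ r := Nat.div_mul_le_self r q
        rw [Finset.sum_Ico_succ_top h2]
        have hs := hstep r hdvd
        have hC : (0:ℝ) ≤ L ^ 2 / (S2:ℝ) := by positivity
        calc (∫ ω, ‖v (r+1) ω - Gmap f (x (r+1) ω)‖ ^ 2 ∂μ)
            ≤ L ^ 2 / (S2:ℝ) * (∫ ω, ‖x (r+1) ω - x r ω‖ ^ 2 ∂μ)
              + ∫ ω, ‖v r ω - Gmap f (x r ω)‖ ^ 2 ∂μ := hs
          _ ≤ L ^ 2 / (S2:ℝ) * (∫ ω, ‖x (r+1) ω - x r ω‖ ^ 2 ∂μ)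
              + (L ^ 2 / (S2 : ℝ) *
                  ∑ t ∈ Finset.Ico (r / q * q) r, ∫ ω, ‖x (t + 1) ω - x t ω‖ ^ 2 ∂μ
                + ∫ ω, ‖v (r / q * q) ω - Gmap f (x (r / q * q) ω)‖ ^ 2 ∂μ) := by
              linarith
          _ = L ^ 2 / (S2 : ℝ) *
                ((∑ t ∈ Finset.Ico (r / q * q) r, ∫ ω, ‖x (t + 1) ω - x t ω‖ ^ 2 ∂μ)
                  + ∫ ω, ‖x (r+1) ω - x r ω‖ ^ 2 ∂μ)
              + ∫ ω, ‖v (r / q * q) ω - Gmap f (x (r / q * q) ω)‖ ^ 2 ∂μ := by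
              ring
  intro r
  have h := main r
  have hsub : (∑ t ∈ Finset.Ico (r / q * q) r, ∫ ω, ‖x (t + 1) ω - x t ω‖ ^ 2 ∂μ)
      ≤ ∑ t ∈ Finset.Icc (r / q * q) r, ∫ ω, ‖x (t + 1) ω - x t ω‖ ^ 2 ∂μ :=
    Finset.sum_le_sum_of_subset_of_nonneg Finset.Ico_subset_Icc_self
      (fun t _ _ => hDnonneg t)
  have hC : (0:ℝ) ≤ L ^ 2 / (S2:ℝ) := by positivity
  have := mul_le_mul_of_nonneg_left hsub hC
  linarith
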